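/- Let H be a nonzero complex Hilbert space and let B be an invertible bounded linear operator on H. Then ν_{B⁻¹} ≥ ν_B/‖B‖² and ν_B ≥ ν_{B⁻¹}/‖B⁻¹‖². -/

import Mathlib

/-- The numerical range (field of values) of a bounded operator `T`:
`W(T) = { ⟨Tz, z⟩ : ‖z‖ = 1 }`, where the inner product `⟨·,·⟩` is linear in
its first argument (so `⟨Tz, z⟩` is `inner z (T z)` in Mathlib's convention). -/
def numRange {H : Type*} [NormedAddCommGroup H] [InnerProductSpace ℂ H]
    (T : H →L[ℂ] H) : Set ℂ :=
  {c | ∃ z : H, ‖z‖ = 1 ∧ c = (inner ℂ z (T z) : ℂ)}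

/-- `ν_T = inf { |λ| : λ ∈ W(T) }`. -/
noncomputable def nu {H : Type*} [NormedAddCommGroup H] [InnerProductSpace ℂ H]
    (T : H →L[ℂ] H) : ℝ :=
  sInf {x : ℝ | ∃ c ∈ numRange T, x = ‖c‖}

lemma nu_nonneg {H : Type*} [NormedAddCommGroup H] [InnerProductSpace ℂ H]
    (T : H →L[ℂ] H) : 0 ≤ nu T :=
  Real.sInf_nonneg (by rintro x ⟨c, _, rfl⟩; exact norm_nonneg c)

lemma nu_aux {H : Type*} [NormedAddCommGroup H] [InnerProductSpace ℂ H] [CompleteSpace H]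
    [Nontrivial H] (B : H ≃L[ℂ] H) :
    nu (B.symm : H →L[ℂ] H) ≥ nu (B : H →L[ℂ] H) / ‖(B : H →L[ℂ] H)‖ ^ 2 := by
  obtain ⟨v, hv⟩ := exists_ne (0 : H)
  have hBnorm : 0 < ‖(B : H →L[ℂ] H)‖ := by
    refine norm_pos_iff.mpr (fun h => hv (B.injective ?_))
    have := congrFun (congrArg DFunLike.coe h) v
    simpa using this
  apply le_csInf
  · refine ⟨‖(inner ℂ (‖v‖⁻¹ • v) ((B.symm : H →L[ℂ] H) (‖v‖⁻¹ • v)) : ℂ)‖,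
      ⟨_, ⟨‖v‖⁻¹ • v, ?_, rfl⟩, rfl⟩⟩
    rw [norm_smul]
    simp [norm_ne_zero_iff.mpr hv]
  · rintro x ⟨c, ⟨z, hz, rfl⟩, rfl⟩
    set y : H := B.symm z with hy
    have hBy : B y = z := B.apply_symm_apply z
    have hzne : z ≠ 0 := by
      intro h; rw [h, norm_zero] at hz; exact zero_ne_one hz
    have hyne : y ≠ 0 := fun h => hzne (by rw [← hBy, h, map_zero])
    have hynorm : 0 < ‖y‖ := norm_pos_iff.mpr hyne
    -- ‖y‖ ≥ 1/‖B‖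
    have hylb : ‖(B : H →L[ℂ] H)‖⁻¹ ≤ ‖y‖ := by
      have h1 : (1 : ℝ) = ‖B y‖ := by rw [hBy, hz]
      have h2 : ‖B y‖ ≤ ‖(B : H →L[ℂ] H)‖ * ‖y‖ := (B : H →L[ℂ] H).le_opNorm y
      rw [inv_le_iff_one_le_mul₀ hBnorm]
      calc (1 : ℝ) = ‖B y‖ := h1
        _ ≤ ‖(B : H →L[ℂ] H)‖ * ‖y‖ := h2
        _ = ‖y‖ * ‖(B : H →L[ℂ] H)‖ := mul_comm _ _
    set u : H := (‖y‖ : ℂ)⁻¹ • y with hu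
    have hunorm : ‖u‖ = 1 := by
      rw [hu, norm_smul]
      simp [hynorm.ne']
    have hmem : ‖(inner ℂ u ((B : H →L[ℂ] H) u) : ℂ)‖ ∈
        {x : ℝ | ∃ c ∈ numRange (B : H →L[ℂ] H), x = ‖c‖} :=
      ⟨_, ⟨u, hunorm, rfl⟩, rfl⟩
    have hnu_le : nu (B : H →L[ℂ] H) ≤ ‖(inner ℂ u ((B : H →L[ℂ] H) u) : ℂ)‖ :=
      csInf_le ⟨0, by rintro x ⟨c, _, rfl⟩; exact norm_nonneg c⟩ hmem
    -- compute ‖inner u (B u)‖ = ‖y‖⁻² ‖inner y (B y)‖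
    have hcomp : ‖(inner ℂ u ((B : H →L[ℂ] H) u) : ℂ)‖
        = ‖y‖⁻¹ * ‖y‖⁻¹ * ‖(inner ℂ y ((B : H →L[ℂ] H) y) : ℂ)‖ := by
      rw [hu, map_smul, inner_smul_left, inner_smul_right]
      simp [norm_mul, mul_assoc]
    -- inner z (B.symm z) = inner (B y) y, norm equals ‖inner y (B y)‖
    have hswap : ‖(inner ℂ z ((B.symm : H →L[ℂ] H) z) : ℂ)‖
        = ‖(inner ℂ y ((B : H →L[ℂ] H) y) : ℂ)‖ := by
      have : (inner ℂ z ((B.symm : H →L[ℂ] H) z) : ℂ) = inner ℂ (B y) y := by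
        rw [hBy]; rfl
      rw [this, ← inner_conj_symm]
      exact RCLike.norm_conj _
    rw [hswap]
    have key : nu (B : H →L[ℂ] H) ≤ ‖y‖⁻¹ * ‖y‖⁻¹ * ‖(inner ℂ y ((B : H →L[ℂ] H) y) : ℂ)‖ :=
      hcomp ▸ hnu_le
    have h3 : nu (B : H →L[ℂ] H) / ‖(B : H →L[ℂ] H)‖ ^ 2
        ≤ ‖y‖ * ‖y‖ * nu (B : H →L[ℂ] H) := by
      have hle : ‖(B : H →L[ℂ] H)‖⁻¹ * ‖(B : H →L[ℂ] H)‖⁻¹ ≤ ‖y‖ * ‖y‖ :=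
        mul_le_mul hylb hylb (by positivity) hynorm.le
      rw [div_eq_mul_inv, sq, mul_inv]
      calc nu (B : H →L[ℂ] H) * (‖(B : H →L[ℂ] H)‖⁻¹ * ‖(B : H →L[ℂ] H)‖⁻¹)
          ≤ nu (B : H →L[ℂ] H) * (‖y‖ * ‖y‖) :=
            mul_le_mul_of_nonneg_left hle (nu_nonneg _)
        _ = ‖y‖ * ‖y‖ * nu (B : H →L[ℂ] H) := by ring
    refine h3.trans ?_
    have := mul_le_mul_of_nonneg_left key (by positivity : (0:ℝ) ≤ ‖y‖ * ‖y‖)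
    calc ‖y‖ * ‖y‖ * nu (B : H →L[ℂ] H)
        ≤ ‖y‖ * ‖y‖ * (‖y‖⁻¹ * ‖y‖⁻¹ * ‖(inner ℂ y ((B : H →L[ℂ] H) y) : ℂ)‖) := this
      _ = ‖(inner ℂ y ((B : H →L[ℂ] H) y) : ℂ)‖ := by
          field_simp

/-- Inequalities (3.6b): `ν_{B⁻¹} ≥ ν_B / ‖B‖²` and `ν_B ≥ ν_{B⁻¹} / ‖B⁻¹‖²`. -/
theorem nu_inv_ge_nu_div_norm_sq
    {H : Type*} [NormedAddCommGroup H] [InnerProductSpace ℂ H] [CompleteSpace H]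
    [Nontrivial H] (B : H ≃L[ℂ] H) :
    nu (B.symm : H →L[ℂ] H) ≥ nu (B : H →L[ℂ] H) / ‖(B : H →L[ℂ] H)‖ ^ 2 ∧
    nu (B : H →L[ℂ] H) ≥ nu (B.symm : H →L[ℂ] H) / ‖(B.symm : H →L[ℂ] H)‖ ^ 2 := by
  refine ⟨nu_aux B, ?_⟩
  have := nu_aux B.symm
  simpa using this
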